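/- Let E and X be real Banach lattices, let F be a closed vector sublattice of E, let i : X → F be a Banach lattice isomorphism (a bijective bounded linear lattice homomorphism with bounded inverse), and let P : E → E be a positive bounded linear projection (P² = P) with range F. If T : X → X is a positive, power-bounded, mean ergodic bounded linear operator which is not weakly almost periodic, then the operator S := i ∘ T ∘ i⁻¹ ∘ P : E → E is positive, power-bounded, mean ergodic, and not weakly almost periodic. -/

import Mathlib

open Filter

/-- Let `E`, `X` be real Banach lattices, `F` a closed vector
sublattice of `E`, `i : X → F ⊆ E` a Banach lattice isomorphism onto `F` (injective
bounded linear lattice homomorphism with bounded inverse and range `F`) and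
`P : E → E` a positive bounded linear projection with range `F`. If `T : X → X` is
positive, power-bounded, mean ergodic and not weakly almost periodic, then
`S = i ∘ T ∘ i⁻¹ ∘ P` (characterized by `S y = i (T x)` whenever `i x = P y`) is
positive, power-bounded, mean ergodic and not weakly almost periodic. -/
theorem transfer_counterexample_along_lattice_isomorphism
    (E X : Type*)
    [NormedAddCommGroup E] [Lattice E] [HasSolidNorm E] [IsOrderedAddMonoid E]
    [NormedSpace ℝ E] [CompleteSpace E] [PosSMulStrictMono ℝ E] [PosSMulReflectLT ℝ E]
    [NormedAddCommGroup X] [Lattice X] [HasSolidNorm X] [IsOrderedAddMonoid X]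
    [NormedSpace ℝ X] [CompleteSpace X] [PosSMulStrictMono ℝ X] [PosSMulReflectLT ℝ X]
    (F : Set E) (hFclosed : IsClosed F)
    (i : X →L[ℝ] E)
    (hi_range : Set.range i = F)
    (hi_inj : Function.Injective i)
    (hi_inv : ∃ c : ℝ, 0 < c ∧ ∀ x : X, c * ‖x‖ ≤ ‖i x‖)
    (hi_lat : ∀ x y : X, i (x ⊔ y) = i x ⊔ i y)
    (P : E →L[ℝ] E)
    (hP_pos : ∀ y : E, 0 ≤ y → 0 ≤ P y)
    (hP_proj : P.comp P = P)
    (hP_range : Set.range P = F)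
    (T : X →L[ℝ] X)
    (hT_pos : ∀ x : X, 0 ≤ x → 0 ≤ T x)
    (hT_pb : ∃ M : ℝ, ∀ n : ℕ, ‖T ^ n‖ ≤ M)
    (hT_me : ∀ x : X, ∃ z : X,
      Tendsto (fun n : ℕ => (n : ℝ)⁻¹ • ∑ k ∈ Finset.range n, (T ^ k) x) atTop (nhds z))
    (hT_nwap : ¬ ∀ x : X,
      IsCompact (closure (Set.range fun n : ℕ => toWeakSpace ℝ X ((T ^ n) x))))
    (S : E →L[ℝ] E)
    (hS : ∀ (y : E) (x : X), i x = P y → S y = i (T x)) :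
    (∀ y : E, 0 ≤ y → 0 ≤ S y) ∧
    (∃ M : ℝ, ∀ n : ℕ, ‖S ^ n‖ ≤ M) ∧
    (∀ y : E, ∃ z : E,
      Tendsto (fun n : ℕ => (n : ℝ)⁻¹ • ∑ k ∈ Finset.range n, (S ^ k) y) atTop (nhds z)) ∧
    ¬ ∀ y : E,
      IsCompact (closure (Set.range fun n : ℕ => toWeakSpace ℝ E ((S ^ n) y))) := by
  obtain ⟨c, hc, hci⟩ := hi_inv
  obtain ⟨M, hM⟩ := hT_pb
  have hM0 : 0 ≤ M := le_trans (norm_nonneg _) (hM 0)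
  -- i is positive
  have hi_pos : ∀ x : X, 0 ≤ x → 0 ≤ i x := by
    intro x hx
    have h1 : i x ⊔ 0 = i x := by
      rw [← map_zero i, ← hi_lat, sup_eq_left.mpr hx]
    exact sup_eq_left.mp h1
  -- i reflects positivity
  have hi_refl : ∀ x : X, 0 ≤ i x → 0 ≤ x := by
    intro x hx
    have h1 : i (x ⊔ 0) = i x := by
      rw [hi_lat, map_zero, sup_eq_left.mpr hx]
    have := hi_inj h1
    exact sup_eq_left.mp this
  -- P fixes the range of i
  have hPF : ∀ x : X, P (i x) = i x := by
    intro x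
    have h1 : i x ∈ F := hi_range ▸ ⟨x, rfl⟩
    rw [← hP_range] at h1
    obtain ⟨e, he⟩ := h1
    rw [← he, ← ContinuousLinearMap.comp_apply, hP_proj]
  -- the (set-theoretic) inverse of i composed with P
  have hQex : ∀ y : E, ∃ x : X, i x = P y := by
    intro y
    have h1 : P y ∈ F := hP_range ▸ ⟨y, rfl⟩
    rw [← hi_range] at h1
    exact h1
  set q : E → X := fun y => Classical.choose (hQex y) with hq_def
  have hq : ∀ y : E, i (q y) = P y := fun y => Classical.choose_spec (hQex y)
  have hqi : ∀ x : X, q (i x) = x := fun x => hi_inj (by rw [hq, hPF])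
  have hq_add : ∀ y z : E, q (y + z) = q y + q z := fun y z =>
    hi_inj (by rw [hq, map_add, map_add, hq, hq])
  have hq_smul : ∀ (a : ℝ) (y : E), q (a • y) = a • q y := fun a y =>
    hi_inj (by rw [hq, map_smul, map_smul, hq])
  have hq_bound : ∀ y : E, ‖q y‖ ≤ (c⁻¹ * ‖P‖) * ‖y‖ := by
    intro y
    have h1 := hci (q y)
    rw [hq] at h1
    have h2 : ‖P y‖ ≤ ‖P‖ * ‖y‖ := P.le_opNorm y
    have h3 : c * ‖q y‖ ≤ ‖P‖ * ‖y‖ := le_trans h1 h2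
    calc ‖q y‖ = c⁻¹ * (c * ‖q y‖) := by field_simp
    _ ≤ c⁻¹ * (‖P‖ * ‖y‖) := by
        exact mul_le_mul_of_nonneg_left h3 (inv_nonneg.2 hc.le)
    _ = (c⁻¹ * ‖P‖) * ‖y‖ := by ring
  let Q : E →L[ℝ] X := LinearMap.mkContinuous
    { toFun := q, map_add' := hq_add, map_smul' := hq_smul } (c⁻¹ * ‖P‖) hq_bound
  have hQ_apply : ∀ y : E, Q y = q y := fun y => rfl
  -- key intertwining identities
  have hSi : ∀ x : X, S (i x) = i (T x) := fun x => hS (i x) x (hPF x).symm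
  have hSn : ∀ (n : ℕ) (x : X), (S ^ n) (i x) = i ((T ^ n) x) := by
    intro n
    induction n with
    | zero => intro x; simp
    | succ n ih =>
        intro x
        rw [pow_succ', pow_succ', ContinuousLinearMap.mul_apply,
          ContinuousLinearMap.mul_apply, ih, hSi]
  have hSy : ∀ (n : ℕ) (y : E), (S ^ (n + 1)) y = i ((T ^ (n + 1)) (q y)) := by
    intro n y
    have h0 : S y = i (T (q y)) := hS y (q y) (hq y)
    rw [pow_succ, pow_succ, ContinuousLinearMap.mul_apply,
      ContinuousLinearMap.mul_apply, h0, hSn]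
  refine ⟨?_, ?_, ?_, ?_⟩
  · -- positivity
    intro y hy
    have h1 : 0 ≤ i (q y) := by rw [hq]; exact hP_pos y hy
    have h2 : 0 ≤ q y := hi_refl _ h1
    rw [hS y (q y) (hq y)]
    exact hi_pos _ (hT_pos _ h2)
  · -- power boundedness
    refine ⟨max 1 (‖i‖ * M * (c⁻¹ * ‖P‖)), ?_⟩
    intro n
    match n with
    | 0 =>
        rw [pow_zero]
        exact le_trans ContinuousLinearMap.norm_id_le (le_max_left _ _)
    | n + 1 =>
        refine le_trans (ContinuousLinearMap.opNorm_le_bound _ ?_ ?_) (le_max_right _ _)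
        · positivity
        · intro y
          rw [hSy n y]
          calc ‖i ((T ^ (n + 1)) (q y))‖ ≤ ‖i‖ * ‖(T ^ (n + 1)) (q y)‖ := i.le_opNorm _
          _ ≤ ‖i‖ * (‖T ^ (n + 1)‖ * ‖q y‖) :=
              mul_le_mul_of_nonneg_left ((T ^ (n + 1)).le_opNorm _) (norm_nonneg i)
          _ ≤ ‖i‖ * (M * ((c⁻¹ * ‖P‖) * ‖y‖)) := by
              refine mul_le_mul_of_nonneg_left ?_ (norm_nonneg i)
              exact mul_le_mul (hM _) (hq_bound y) (norm_nonneg _) hM0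
          _ = ‖i‖ * M * (c⁻¹ * ‖P‖) * ‖y‖ := by ring
  · -- mean ergodicity
    intro y
    obtain ⟨z, hz⟩ := hT_me (q y)
    refine ⟨i z, ?_⟩
    have hg : Tendsto (fun n : ℕ => (n : ℝ)⁻¹ • (y - i (q y)) +
        i ((n : ℝ)⁻¹ • ∑ k ∈ Finset.range n, (T ^ k) (q y))) atTop (nhds (i z)) := by
      have h1 : Tendsto (fun n : ℕ => (n : ℝ)⁻¹ • (y - i (q y))) atTop (nhds 0) := by
        simpa using (tendsto_inv_atTop_nhds_zero_nat (𝕜 := ℝ)).smul_const (y - i (q y))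
      have h2 : Tendsto (fun n : ℕ =>
          i ((n : ℝ)⁻¹ • ∑ k ∈ Finset.range n, (T ^ k) (q y))) atTop (nhds (i z)) :=
        (i.continuous.tendsto z).comp hz
      simpa using h1.add h2
    refine hg.congr' ?_
    filter_upwards [eventually_ge_atTop 1] with n hn
    have hterm : ∀ k : ℕ, (S ^ k) y =
        (if k = 0 then y - i (q y) else 0) + i ((T ^ k) (q y)) := by
      intro k
      match k with
      | 0 => simp
      | k + 1 => simp [hSy k y]
    have hsum : ∑ k ∈ Finset.range n, (S ^ k) y =
        (y - i (q y)) + ∑ k ∈ Finset.range n, i ((T ^ k) (q y)) := by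
      rw [Finset.sum_congr rfl fun k _ => hterm k, Finset.sum_add_distrib,
        Finset.sum_ite_eq' (Finset.range n) 0 fun _ => y - i (q y)]
      simp [Finset.mem_range, Nat.lt_of_lt_of_le Nat.zero_lt_one hn]
    rw [hsum, smul_add, map_smul, map_sum]
  · -- not weakly almost periodic
    intro hcomp
    apply hT_nwap
    intro x
    have hB : IsCompact (closure (Set.range fun n : ℕ =>
        toWeakSpace ℝ E ((S ^ n) (i x)))) := hcomp (i x)
    set Qw : WeakSpace ℝ E →L[ℝ] WeakSpace ℝ X := WeakSpace.map Q with hQw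
    have hQB : IsCompact (Qw '' closure (Set.range fun n : ℕ =>
        toWeakSpace ℝ E ((S ^ n) (i x)))) := hB.image Qw.continuous
    haveI hT2 : T2Space (WeakSpace ℝ X) := by
      have hinj : Function.Injective ((topDualPairing ℝ X).flip) := by
        intro a b hab
        by_contra hne
        obtain ⟨f, hf⟩ := SeparatingDual.exists_separating_of_ne (R := ℝ) hne
        exact hf (congrArg (fun g => g f) hab)
      exact (WeakBilin.isEmbedding hinj).t2Space
    have hclosed : IsClosed (Qw '' closure (Set.range fun n : ℕ =>
        toWeakSpace ℝ E ((S ^ n) (i x)))) := hQB.isClosed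
    have hsub : (Set.range fun n : ℕ => toWeakSpace ℝ X ((T ^ n) x)) ⊆
        Qw '' closure (Set.range fun n : ℕ => toWeakSpace ℝ E ((S ^ n) (i x))) := by
      rintro _ ⟨n, rfl⟩
      refine ⟨toWeakSpace ℝ E ((S ^ n) (i x)), subset_closure ⟨n, rfl⟩, ?_⟩
      have h1 : Q ((S ^ n) (i x)) = (T ^ n) x := by
        rw [hSn n x, hQ_apply, hqi]
      calc Qw (toWeakSpace ℝ E ((S ^ n) (i x)))
          = toWeakSpace ℝ X (Q ((S ^ n) (i x))) := rfl
        _ = toWeakSpace ℝ X ((T ^ n) x) := by rw [h1]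
    exact hQB.of_isClosed_subset isClosed_closure (closure_minimal hsub hclosed)
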